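/- The spherical join M₁ ∗ M₂ of two metric spaces of diameter at most π, with the metric d((θ,p₁,p₂),(θ',p₁',p₂')) = arccos(cos θ cos θ' cos(min(d₁(p₁,p₁'),π)) + sin θ sin θ' cos(min(d₂(p₂,p₂'),π))), is a metric space; moreover, if M₁ and M₂ are unit spheres of dimensions n₁ and n₂, then M₁ ∗ M₂ is isometric to the unit sphere of dimension n₁ + n₂ + 1. -/

import Mathlib

open Set Real
open scoped RealInnerProductSpace

/-- The spherical-join distance on [0,π/2] × M₁ × M₂ induced by distance
functions d₁, d₂. -/
noncomputable def joinDistOf {M₁ M₂ : Type*} (d₁ : M₁ → M₁ → ℝ) (d₂ : M₂ → M₂ → ℝ)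
    (p q : ℝ × M₁ × M₂) : ℝ :=
  Real.arccos (Real.cos p.1 * Real.cos q.1 * Real.cos (min (d₁ p.2.1 q.2.1) π)
    + Real.sin p.1 * Real.sin q.1 * Real.cos (min (d₂ p.2.2 q.2.2) π))

/-- The identification relation of the spherical join: at θ = 0 the M₂-coordinate
is irrelevant and at θ = π/2 the M₁-coordinate is irrelevant. -/
def joinRel {M₁ M₂ : Type*} (p q : ℝ × M₁ × M₂) : Prop :=
  p.1 = q.1 ∧ (p.1 = π / 2 ∨ p.2.1 = q.2.1) ∧ (p.1 = 0 ∨ p.2.2 = q.2.2)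

/-- arccos is antitone. -/
lemma myArccosLe {x y : ℝ} (h2 : x ≤ y) : Real.arccos y ≤ Real.arccos x := by
  unfold Real.arccos
  have := Real.monotone_arcsin h2
  linarith

/-- Triangle inequality for the angle between unit vectors. -/
lemma arccosInnerTriangle {E : Type*} [NormedAddCommGroup E] [InnerProductSpace ℝ E]
    {x y z : E} (hx : ‖x‖ = 1) (hy : ‖y‖ = 1) (hz : ‖z‖ = 1) :
    Real.arccos ⟪x, z⟫ ≤ Real.arccos ⟪x, y⟫ + Real.arccos ⟪y, z⟫ := by
  set A := Real.arccos ⟪x, y⟫ with hA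
  set B := Real.arccos ⟪y, z⟫ with hB
  rcases le_or_gt π (A + B) with h | h
  · exact (Real.arccos_le_pi _).trans h
  · have htx : |⟪x, y⟫| ≤ 1 := by
      simpa [hx, hy] using abs_real_inner_le_norm x y
    have htz : |⟪y, z⟫| ≤ 1 := by
      simpa [hy, hz] using abs_real_inner_le_norm y z
    obtain ⟨htx1, htx2⟩ := abs_le.1 htx
    obtain ⟨htz1, htz2⟩ := abs_le.1 htz
    set w : E := x - ⟪x, y⟫ • y with hw
    set w' : E := z - ⟪z, y⟫ • y with hw'
    have hyy : ⟪y, y⟫ = 1 := by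
      rw [real_inner_self_eq_norm_sq, hy]; norm_num
    have hxx : ⟪x, x⟫ = 1 := by
      rw [real_inner_self_eq_norm_sq, hx]; norm_num
    have hzz : ⟪z, z⟫ = 1 := by
      rw [real_inner_self_eq_norm_sq, hz]; norm_num
    have hinner : ⟪w, w'⟫ = ⟪x, z⟫ - ⟪x, y⟫ * ⟪y, z⟫ := by
      simp only [hw, hw', inner_sub_left, inner_sub_right, real_inner_smul_left,
        real_inner_smul_right, hyy]
      rw [real_inner_comm z y, real_inner_comm y x]
      ring
    have hnw : ‖w‖ ^ 2 = 1 - ⟪x, y⟫ ^ 2 := by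
      rw [← real_inner_self_eq_norm_sq]
      simp only [hw, inner_sub_left, inner_sub_right, real_inner_smul_left,
        real_inner_smul_right, hyy, hxx]
      rw [real_inner_comm y x]
      ring
    have hnw' : ‖w'‖ ^ 2 = 1 - ⟪y, z⟫ ^ 2 := by
      rw [← real_inner_self_eq_norm_sq]
      simp only [hw', inner_sub_left, inner_sub_right, real_inner_smul_left,
        real_inner_smul_right, hyy, hzz]
      rw [real_inner_comm y z, real_inner_comm z y]
      ring
    have hnww : ‖w‖ = Real.sqrt (1 - ⟪x, y⟫ ^ 2) := by
      rw [← hnw, Real.sqrt_sq (norm_nonneg _)]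
    have hnww' : ‖w'‖ = Real.sqrt (1 - ⟪y, z⟫ ^ 2) := by
      rw [← hnw', Real.sqrt_sq (norm_nonneg _)]
    have hcs : -(‖w‖ * ‖w'‖) ≤ ⟪w, w'⟫ := neg_le_of_abs_le (abs_real_inner_le_norm w w')
    have hkey : Real.cos (A + B) ≤ ⟪x, z⟫ := by
      rw [Real.cos_add, hA, hB, Real.cos_arccos htx1 htx2, Real.cos_arccos htz1 htz2,
        Real.sin_arccos, Real.sin_arccos]
      have hxz : ⟪x, z⟫ = ⟪x, y⟫ * ⟪y, z⟫ + ⟪w, w'⟫ := by rw [hinner]; ring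
      rw [hxz]
      have h2 := hcs
      rw [hnww, hnww'] at h2
      linarith
    calc Real.arccos ⟪x, z⟫ ≤ Real.arccos (Real.cos (A + B)) := myArccosLe hkey
      _ = A + B := Real.arccos_cos
        (add_nonneg (Real.arccos_nonneg _) (Real.arccos_nonneg _)) h.le

/-- Comparison points on the unit 3-sphere. -/
noncomputable def jvec (θ α β : ℝ) : EuclideanSpace ℝ (Fin 4) :=
  WithLp.toLp 2 ![Real.cos θ * Real.cos α, Real.cos θ * Real.sin α,
    Real.sin θ * Real.cos β, Real.sin θ * Real.sin β]

lemma jvec_inner (θ θ' α α' β β' : ℝ) :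
    ⟪jvec θ α β, jvec θ' α' β'⟫ =
      Real.cos θ * Real.cos θ' * Real.cos (α - α')
        + Real.sin θ * Real.sin θ' * Real.cos (β - β') := by
  simp [jvec, PiLp.inner_apply, Fin.sum_univ_four, RCLike.inner_apply, Real.cos_sub]
  ring

lemma jvec_norm (θ α β : ℝ) : ‖jvec θ α β‖ = 1 := by
  rw [EuclideanSpace.norm_eq]
  simp only [jvec, Fin.sum_univ_four, Matrix.cons_val_zero, Matrix.cons_val_one,
    Matrix.head_cons, Matrix.cons_val_two, Matrix.tail_cons, Matrix.cons_val_three,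
    Real.norm_eq_abs, sq_abs]
  rw [show (Real.cos θ * Real.cos α) ^ 2 + (Real.cos θ * Real.sin α) ^ 2
      + (Real.sin θ * Real.cos β) ^ 2 + (Real.sin θ * Real.sin β) ^ 2 = 1 by
    have h1 := Real.sin_sq_add_cos_sq θ
    have h2 := Real.sin_sq_add_cos_sq α
    have h3 := Real.sin_sq_add_cos_sq β
    nlinarith]
  exact Real.sqrt_one

set_option maxHeartbeats 1000000 in
/-- The spherical join of two metric spaces of diameter ≤ π is a metric space
(the join distance is a pseudometric on [0,π/2] × M₁ × M₂ vanishing exactly on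
the identification relation, hence a metric on the quotient M₁ ∗ M₂); moreover,
the join of unit spheres of dimensions n₁ and n₂ (with their angular metrics) is
isometric to the unit sphere of dimension n₁ + n₂ + 1 with its angular metric. -/
theorem spherical_join_metric_and_spheres
    {M₁ M₂ : Type*} [MetricSpace M₁] [MetricSpace M₂]
    (hd₁ : ∀ u v : M₁, dist u v ≤ π) (hd₂ : ∀ u v : M₂, dist u v ≤ π)
    (n₁ n₂ : ℕ) :
    -- (1) the join distance is a pseudometric …
    ((∀ p : ℝ × M₁ × M₂, p.1 ∈ Icc 0 (π / 2) →
        joinDistOf dist dist p p = 0) ∧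
     (∀ p q : ℝ × M₁ × M₂, p.1 ∈ Icc 0 (π / 2) → q.1 ∈ Icc 0 (π / 2) →
        joinDistOf dist dist p q = joinDistOf dist dist q p) ∧
     (∀ p q r : ℝ × M₁ × M₂, p.1 ∈ Icc 0 (π / 2) → q.1 ∈ Icc 0 (π / 2) →
        r.1 ∈ Icc 0 (π / 2) →
        joinDistOf dist dist p r ≤ joinDistOf dist dist p q + joinDistOf dist dist q r) ∧
     -- … vanishing exactly on the identification relation (so it is a metric on
     -- the quotient M₁ ∗ M₂):
     (∀ p q : ℝ × M₁ × M₂, p.1 ∈ Icc 0 (π / 2) → q.1 ∈ Icc 0 (π / 2) →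
        (joinDistOf dist dist p q = 0 ↔ joinRel p q))) ∧
    -- (2) the spherical join of unit spheres is the unit sphere:
    (∃ Φ : ℝ × Metric.sphere (0 : EuclideanSpace ℝ (Fin (n₁ + 1))) 1 ×
            Metric.sphere (0 : EuclideanSpace ℝ (Fin (n₂ + 1))) 1 →
          WithLp 2 (EuclideanSpace ℝ (Fin (n₁ + 1)) × EuclideanSpace ℝ (Fin (n₂ + 1))),
      (∀ p, p.1 ∈ Icc 0 (π / 2) → ‖Φ p‖ = 1) ∧
      (∀ v, ‖v‖ = 1 → ∃ p, p.1 ∈ Icc 0 (π / 2) ∧ Φ p = v) ∧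
      (∀ p q, p.1 ∈ Icc 0 (π / 2) → q.1 ∈ Icc 0 (π / 2) →
        joinDistOf
          (fun u v : Metric.sphere (0 : EuclideanSpace ℝ (Fin (n₁ + 1))) 1 =>
            Real.arccos ⟪(u : EuclideanSpace ℝ (Fin (n₁ + 1))),
              (v : EuclideanSpace ℝ (Fin (n₁ + 1)))⟫)
          (fun u v : Metric.sphere (0 : EuclideanSpace ℝ (Fin (n₂ + 1))) 1 =>
            Real.arccos ⟪(u : EuclideanSpace ℝ (Fin (n₂ + 1))),
              (v : EuclideanSpace ℝ (Fin (n₂ + 1)))⟫)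
          p q
        = Real.arccos ⟪Φ p, Φ q⟫)) := by
  have hπ : (0:ℝ) < π := Real.pi_pos
  constructor
  · refine ⟨?_, ?_, ?_, ?_⟩
    · -- reflexivity
      intro p _
      unfold joinDistOf
      rw [dist_self, dist_self, min_eq_left hπ.le, Real.cos_zero]
      rw [show Real.cos p.1 * Real.cos p.1 * 1 + Real.sin p.1 * Real.sin p.1 * 1 = 1 by
        have := Real.sin_sq_add_cos_sq p.1; nlinarith]
      exact Real.arccos_one
    · -- symmetry
      intro p q _ _
      unfold joinDistOf
      rw [dist_comm p.2.1, dist_comm p.2.2]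
      ring_nf
    · -- triangle inequality
      intro p q r hp hq hr
      obtain ⟨hp0, hp2⟩ := hp
      obtain ⟨hq0, hq2⟩ := hq
      obtain ⟨hr0, hr2⟩ := hr
      have hcp : 0 ≤ Real.cos p.1 := Real.cos_nonneg_of_mem_Icc ⟨by linarith, hp2⟩
      have hcq : 0 ≤ Real.cos q.1 := Real.cos_nonneg_of_mem_Icc ⟨by linarith, hq2⟩
      have hcr : 0 ≤ Real.cos r.1 := Real.cos_nonneg_of_mem_Icc ⟨by linarith, hr2⟩
      have hsp : 0 ≤ Real.sin p.1 := Real.sin_nonneg_of_nonneg_of_le_pi hp0 (by linarith)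
      have hsq : 0 ≤ Real.sin q.1 := Real.sin_nonneg_of_nonneg_of_le_pi hq0 (by linarith)
      have hsr : 0 ≤ Real.sin r.1 := Real.sin_nonneg_of_nonneg_of_le_pi hr0 (by linarith)
      unfold joinDistOf
      rw [min_eq_left (hd₁ p.2.1 q.2.1), min_eq_left (hd₂ p.2.2 q.2.2),
        min_eq_left (hd₁ q.2.1 r.2.1), min_eq_left (hd₂ q.2.2 r.2.2),
        min_eq_left (hd₁ p.2.1 r.2.1), min_eq_left (hd₂ p.2.2 r.2.2)]
      set a₁ := dist p.2.1 q.2.1 with ha₁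
      set a₂ := dist q.2.1 r.2.1 with ha₂
      set a₃ := dist p.2.1 r.2.1 with ha₃
      set b₁ := dist p.2.2 q.2.2 with hb₁
      set b₂ := dist q.2.2 r.2.2 with hb₂
      set b₃ := dist p.2.2 r.2.2 with hb₃
      have ha₁0 : 0 ≤ a₁ := dist_nonneg
      have ha₂0 : 0 ≤ a₂ := dist_nonneg
      have ha₃0 : 0 ≤ a₃ := dist_nonneg
      have hb₁0 : 0 ≤ b₁ := dist_nonneg
      have hb₂0 : 0 ≤ b₂ := dist_nonneg
      have hb₃0 : 0 ≤ b₃ := dist_nonneg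
      have ha₁π : a₁ ≤ π := hd₁ _ _
      have ha₂π : a₂ ≤ π := hd₁ _ _
      have ha₃π : a₃ ≤ π := hd₁ _ _
      have hb₁π : b₁ ≤ π := hd₂ _ _
      have hb₂π : b₂ ≤ π := hd₂ _ _
      have hb₃π : b₃ ≤ π := hd₂ _ _
      have htri_a : a₃ ≤ a₁ + a₂ := dist_triangle _ _ _
      have htri_b : b₃ ≤ b₁ + b₂ := dist_triangle _ _ _
      set a₂' := min a₂ (π - a₁) with ha₂'
      set b₂' := min b₂ (π - b₁) with hb₂'
      have ha₂'0 : 0 ≤ a₂' := le_min ha₂0 (by linarith)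
      have hb₂'0 : 0 ≤ b₂' := le_min hb₂0 (by linarith)
      have ha₂'le : a₂' ≤ a₂ := min_le_left _ _
      have hb₂'le : b₂' ≤ b₂ := min_le_left _ _
      have ha₂'π : a₁ + a₂' ≤ π := by have := min_le_right a₂ (π - a₁); linarith
      have hb₂'π : b₁ + b₂' ≤ π := by have := min_le_right b₂ (π - b₁); linarith
      have h5a : a₃ ≤ a₁ + a₂' := by
        rcases le_total a₂ (π - a₁) with h | h
        · rw [ha₂', min_eq_left h]; exact htri_a
        · rw [ha₂', min_eq_right h]; linarith
      have h5b : b₃ ≤ b₁ + b₂' := by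
        rcases le_total b₂ (π - b₁) with h | h
        · rw [hb₂', min_eq_left h]; exact htri_b
        · rw [hb₂', min_eq_right h]; linarith
      have hca : Real.cos (a₁ + a₂') ≤ Real.cos a₃ :=
        Real.cos_le_cos_of_nonneg_of_le_pi ha₃0 ha₂'π h5a
      have hcb : Real.cos (b₁ + b₂') ≤ Real.cos b₃ :=
        Real.cos_le_cos_of_nonneg_of_le_pi hb₃0 hb₂'π h5b
      have hca2 : Real.cos a₂ ≤ Real.cos a₂' :=
        Real.cos_le_cos_of_nonneg_of_le_pi ha₂'0 ha₂π ha₂'le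
      have hcb2 : Real.cos b₂ ≤ Real.cos b₂' :=
        Real.cos_le_cos_of_nonneg_of_le_pi hb₂'0 hb₂π hb₂'le
      have ixy : ⟪jvec p.1 0 0, jvec q.1 a₁ b₁⟫ =
          Real.cos p.1 * Real.cos q.1 * Real.cos a₁
            + Real.sin p.1 * Real.sin q.1 * Real.cos b₁ := by
        rw [jvec_inner, zero_sub, zero_sub, Real.cos_neg, Real.cos_neg]
      have iyz : ⟪jvec q.1 a₁ b₁, jvec r.1 (a₁ + a₂') (b₁ + b₂')⟫ =
          Real.cos q.1 * Real.cos r.1 * Real.cos a₂'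
            + Real.sin q.1 * Real.sin r.1 * Real.cos b₂' := by
        rw [jvec_inner, show a₁ - (a₁ + a₂') = -a₂' by ring,
          show b₁ - (b₁ + b₂') = -b₂' by ring, Real.cos_neg, Real.cos_neg]
      have ixz : ⟪jvec p.1 0 0, jvec r.1 (a₁ + a₂') (b₁ + b₂')⟫ =
          Real.cos p.1 * Real.cos r.1 * Real.cos (a₁ + a₂')
            + Real.sin p.1 * Real.sin r.1 * Real.cos (b₁ + b₂') := by
        rw [jvec_inner, zero_sub, zero_sub, Real.cos_neg, Real.cos_neg]
      have step1 : Real.arccos (Real.cos p.1 * Real.cos r.1 * Real.cos a₃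
          + Real.sin p.1 * Real.sin r.1 * Real.cos b₃)
          ≤ Real.arccos ⟪jvec p.1 0 0, jvec r.1 (a₁ + a₂') (b₁ + b₂')⟫ := by
        apply myArccosLe
        rw [ixz]
        have h1 := mul_le_mul_of_nonneg_left hca (mul_nonneg hcp hcr)
        have h2 := mul_le_mul_of_nonneg_left hcb (mul_nonneg hsp hsr)
        linarith
      have step2 := arccosInnerTriangle (jvec_norm p.1 0 0) (jvec_norm q.1 a₁ b₁)
        (jvec_norm r.1 (a₁ + a₂') (b₁ + b₂'))
      have step4 : Real.arccos ⟪jvec q.1 a₁ b₁, jvec r.1 (a₁ + a₂') (b₁ + b₂')⟫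
          ≤ Real.arccos (Real.cos q.1 * Real.cos r.1 * Real.cos a₂
            + Real.sin q.1 * Real.sin r.1 * Real.cos b₂) := by
        apply myArccosLe
        rw [iyz]
        have h1 := mul_le_mul_of_nonneg_left hca2 (mul_nonneg hcq hcr)
        have h2 := mul_le_mul_of_nonneg_left hcb2 (mul_nonneg hsq hsr)
        linarith
      rw [ixy] at step2
      linarith
    · -- vanishing iff joinRel
      intro p q hp hq
      obtain ⟨hp0, hp2⟩ := hp
      obtain ⟨hq0, hq2⟩ := hq
      have hcp : 0 ≤ Real.cos p.1 := Real.cos_nonneg_of_mem_Icc ⟨by linarith, hp2⟩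
      have hcq : 0 ≤ Real.cos q.1 := Real.cos_nonneg_of_mem_Icc ⟨by linarith, hq2⟩
      have hsp : 0 ≤ Real.sin p.1 := Real.sin_nonneg_of_nonneg_of_le_pi hp0 (by linarith)
      have hsq : 0 ≤ Real.sin q.1 := Real.sin_nonneg_of_nonneg_of_le_pi hq0 (by linarith)
      unfold joinDistOf
      rw [min_eq_left (hd₁ p.2.1 q.2.1), min_eq_left (hd₂ p.2.2 q.2.2)]
      have ha0 : 0 ≤ dist p.2.1 q.2.1 := dist_nonneg
      have hb0 : 0 ≤ dist p.2.2 q.2.2 := dist_nonneg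
      have haπ : dist p.2.1 q.2.1 ≤ π := hd₁ _ _
      have hbπ : dist p.2.2 q.2.2 ≤ π := hd₂ _ _
      have hcale : Real.cos (dist p.2.1 q.2.1) ≤ 1 := Real.cos_le_one _
      have hcble : Real.cos (dist p.2.2 q.2.2) ≤ 1 := Real.cos_le_one _
      rw [Real.arccos_eq_zero]
      constructor
      · intro h1
        have hsum : Real.cos p.1 * Real.cos q.1 + Real.sin p.1 * Real.sin q.1 ≤ 1 := by
          have := Real.cos_le_one (p.1 - q.1)
          rw [Real.cos_sub] at this
          linarith
        have heq1 : Real.cos (p.1 - q.1) = 1 := by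
          rw [Real.cos_sub]
          have h2 : Real.cos p.1 * Real.cos q.1 * Real.cos (dist p.2.1 q.2.1)
              ≤ Real.cos p.1 * Real.cos q.1 := by nlinarith [mul_nonneg hcp hcq]
          have h3 : Real.sin p.1 * Real.sin q.1 * Real.cos (dist p.2.2 q.2.2)
              ≤ Real.sin p.1 * Real.sin q.1 := by nlinarith [mul_nonneg hsp hsq]
          linarith
        have hθ : p.1 = q.1 := by
          have h2 : p.1 - q.1 = 0 :=
            (Real.cos_eq_one_iff_of_lt_of_lt (x := p.1 - q.1)
              (by linarith) (by linarith)).1 heq1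
          linarith
        have hE : Real.cos p.1 * Real.cos q.1 * Real.cos (dist p.2.1 q.2.1)
            + Real.sin p.1 * Real.sin q.1 * Real.cos (dist p.2.2 q.2.2)
            = Real.cos p.1 * Real.cos q.1 + Real.sin p.1 * Real.sin q.1 := by
          rw [Real.cos_sub] at heq1
          nlinarith [mul_nonneg hcp hcq, mul_nonneg hsp hsq]
        have hfst : Real.cos p.1 * Real.cos q.1 * (1 - Real.cos (dist p.2.1 q.2.1)) = 0 := by
          nlinarith [mul_nonneg hcp hcq, mul_nonneg hsp hsq]
        have hsnd : Real.sin p.1 * Real.sin q.1 * (1 - Real.cos (dist p.2.2 q.2.2)) = 0 := by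
          nlinarith [mul_nonneg hcp hcq, mul_nonneg hsp hsq]
        refine ⟨hθ, ?_, ?_⟩
        · rcases mul_eq_zero.1 hfst with h2 | h2
          · rcases mul_eq_zero.1 h2 with h3 | h3
            · left
              exact Real.injOn_cos ⟨hp0, by linarith⟩ ⟨by linarith, by linarith⟩
                (by rw [h3, Real.cos_pi_div_two])
            · left
              rw [hθ]
              exact Real.injOn_cos ⟨hq0, by linarith⟩ ⟨by linarith, by linarith⟩
                (by rw [h3, Real.cos_pi_div_two])
          · right
            have hca1 : Real.cos (dist p.2.1 q.2.1) = 1 := by linarith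
            have h4 : dist p.2.1 q.2.1 = 0 :=
              Real.injOn_cos ⟨ha0, haπ⟩ ⟨le_refl 0, hπ.le⟩
                (by rw [hca1, Real.cos_zero])
            exact dist_eq_zero.1 h4
        · rcases mul_eq_zero.1 hsnd with h2 | h2
          · rcases mul_eq_zero.1 h2 with h3 | h3
            · left
              exact (Real.sin_eq_zero_iff_of_lt_of_lt (by linarith) (by linarith)).1 h3
            · left
              rw [hθ]
              exact (Real.sin_eq_zero_iff_of_lt_of_lt (by linarith) (by linarith)).1 h3
          · right
            have hcb1 : Real.cos (dist p.2.2 q.2.2) = 1 := by linarith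
            have h4 : dist p.2.2 q.2.2 = 0 :=
              Real.injOn_cos ⟨hb0, hbπ⟩ ⟨le_refl 0, hπ.le⟩
                (by rw [hcb1, Real.cos_zero])
            exact dist_eq_zero.1 h4
      · rintro ⟨hθ, h1, h2⟩
        have hpyth := Real.sin_sq_add_cos_sq p.1
        rcases h1 with h1 | h1
        · have hb0' : p.2.2 = q.2.2 := by
            rcases h2 with h2 | h2
            · exfalso; rw [h1] at h2; linarith
            · exact h2
          rw [← hθ, h1, Real.cos_pi_div_two, Real.sin_pi_div_two, hb0', dist_self,
            Real.cos_zero]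
          norm_num
        · rcases h2 with h2 | h2
          · rw [← hθ, h2, Real.sin_zero, Real.cos_zero, h1, dist_self, Real.cos_zero]
            norm_num
          · rw [← hθ, h1, h2, dist_self, dist_self, Real.cos_zero]
            nlinarith
  · -- part 2
    classical
    set E₁ := EuclideanSpace ℝ (Fin (n₁ + 1))
    set E₂ := EuclideanSpace ℝ (Fin (n₂ + 1))
    refine ⟨fun p => (WithLp.equiv 2 (E₁ × E₂)).symm
      (Real.cos p.1 • (p.2.1 : E₁), Real.sin p.1 • (p.2.2 : E₂)), ?_, ?_, ?_⟩
    · intro p hp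
      obtain ⟨hp0, hp2⟩ := hp
      have hcp : 0 ≤ Real.cos p.1 := Real.cos_nonneg_of_mem_Icc ⟨by linarith [Real.pi_pos], hp2⟩
      have hsp : 0 ≤ Real.sin p.1 :=
        Real.sin_nonneg_of_nonneg_of_le_pi hp0 (by linarith [Real.pi_pos])
      have h1 : ‖(p.2.1 : E₁)‖ = 1 := mem_sphere_zero_iff_norm.1 p.2.1.2
      have h2 : ‖(p.2.2 : E₂)‖ = 1 := mem_sphere_zero_iff_norm.1 p.2.2.2
      rw [WithLp.prod_norm_eq_of_L2]
      simp only [WithLp.equiv_symm_apply, WithLp.toLp_fst, WithLp.toLp_snd, WithLp.ofLp_toLp, norm_smul, h1, h2,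
        Real.norm_eq_abs, abs_of_nonneg hcp, abs_of_nonneg hsp, mul_one]
      rw [show Real.cos p.1 ^ 2 + Real.sin p.1 ^ 2 = 1 by
        have := Real.sin_sq_add_cos_sq p.1; linarith]
      exact Real.sqrt_one
    · intro v hv
      set av : E₁ := (WithLp.equiv 2 (E₁ × E₂) v).1 with hav
      set bv : E₂ := (WithLp.equiv 2 (E₁ × E₂) v).2 with hbv
      have hnorm : ‖av‖ ^ 2 + ‖bv‖ ^ 2 = 1 := by
        have := WithLp.prod_norm_sq_eq_of_L2 v
        rw [hv] at this
        norm_num at this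
        exact this.symm
      have hbv1 : ‖bv‖ ≤ 1 := by nlinarith [norm_nonneg av, norm_nonneg bv]
      set θ := Real.arcsin ‖bv‖ with hθdef
      have hθ0 : 0 ≤ θ := Real.arcsin_nonneg.2 (norm_nonneg _)
      have hθ2 : θ ≤ π / 2 := Real.arcsin_le_pi_div_two _
      have hsθ : Real.sin θ = ‖bv‖ := Real.sin_arcsin (by linarith [norm_nonneg bv]) hbv1
      have hcθ : Real.cos θ = ‖av‖ := by
        rw [hθdef, Real.cos_arcsin]
        rw [show 1 - ‖bv‖ ^ 2 = ‖av‖ ^ 2 by linarith]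
        exact Real.sqrt_sq (norm_nonneg _)
      set u : E₁ := if h : av = 0 then EuclideanSpace.single 0 1 else ‖av‖⁻¹ • av with hu
      set w : E₂ := if h : bv = 0 then EuclideanSpace.single 0 1 else ‖bv‖⁻¹ • bv with hw
      have hun : ‖u‖ = 1 := by
        rw [hu]
        split_ifs with h
        · rw [EuclideanSpace.norm_single]; exact norm_one
        · rw [norm_smul, norm_inv, Real.norm_eq_abs, abs_of_nonneg (norm_nonneg _),
            inv_mul_cancel₀ (norm_ne_zero_iff.2 h)]
      have hwn : ‖w‖ = 1 := by
        rw [hw]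
        split_ifs with h
        · rw [EuclideanSpace.norm_single]; exact norm_one
        · rw [norm_smul, norm_inv, Real.norm_eq_abs, abs_of_nonneg (norm_nonneg _),
            inv_mul_cancel₀ (norm_ne_zero_iff.2 h)]
      refine ⟨⟨θ, ⟨u, mem_sphere_zero_iff_norm.2 hun⟩, ⟨w, mem_sphere_zero_iff_norm.2 hwn⟩⟩,
        ⟨hθ0, hθ2⟩, ?_⟩
      rw [Equiv.symm_apply_eq]
      have hfst : Real.cos θ • u = av := by
        rw [hcθ, hu]
        split_ifs with h
        · simp [h]
        · rw [smul_smul, mul_inv_cancel₀ (norm_ne_zero_iff.2 h), one_smul]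
      have hsnd : Real.sin θ • w = bv := by
        rw [hsθ, hw]
        split_ifs with h
        · simp [h]
        · rw [smul_smul, mul_inv_cancel₀ (norm_ne_zero_iff.2 h), one_smul]
      exact Prod.ext (hfst.trans hav) (hsnd.trans hbv)
    · intro p q hp hq
      obtain ⟨hp0, hp2⟩ := hp
      obtain ⟨hq0, hq2⟩ := hq
      have h1p : ‖(p.2.1 : E₁)‖ = 1 := mem_sphere_zero_iff_norm.1 p.2.1.2
      have h2p : ‖(p.2.2 : E₂)‖ = 1 := mem_sphere_zero_iff_norm.1 p.2.2.2
      have h1q : ‖(q.2.1 : E₁)‖ = 1 := mem_sphere_zero_iff_norm.1 q.2.1.2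
      have h2q : ‖(q.2.2 : E₂)‖ = 1 := mem_sphere_zero_iff_norm.1 q.2.2.2
      have hi1 : |⟪(p.2.1 : E₁), (q.2.1 : E₁)⟫| ≤ 1 := by
        simpa [h1p, h1q] using abs_real_inner_le_norm (p.2.1 : E₁) (q.2.1 : E₁)
      have hi2 : |⟪(p.2.2 : E₂), (q.2.2 : E₂)⟫| ≤ 1 := by
        simpa [h2p, h2q] using abs_real_inner_le_norm (p.2.2 : E₂) (q.2.2 : E₂)
      obtain ⟨hi1a, hi1b⟩ := abs_le.1 hi1
      obtain ⟨hi2a, hi2b⟩ := abs_le.1 hi2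
      unfold joinDistOf
      rw [min_eq_left (Real.arccos_le_pi _), min_eq_left (Real.arccos_le_pi _),
        Real.cos_arccos hi1a hi1b, Real.cos_arccos hi2a hi2b]
      congr 1
      rw [WithLp.prod_inner_apply]
      simp only [WithLp.equiv_symm_apply, WithLp.toLp_fst, WithLp.toLp_snd, WithLp.ofLp_toLp, real_inner_smul_left,
        real_inner_smul_right]
      ring
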